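/- Let σ < 0, δ < 0 with σ² + 4δ < 0 and let A = [[σ, δ], [1, 0]]. Fix ρ ≥ 0. Then for every q ∈ Σ_ρ⁺ \ Σ_ρ there exist times t¹ < 0 < t² such that exp(t¹·A)·q ∈ Σ_ρ and exp(t²·A)·q ∈ Σ_ρ. -/

import Mathlib

open Matrix Filter

noncomputable def phiRH {n : Type*} [Fintype n] [DecidableEq n] (μ : ℝ) (hμ : μ ≠ 0)
    (B : Matrix n n ℝ) (hB : B * B = (-(μ ^ 2)) • 1) : ℂ →+* Matrix n n ℝ where
  toFun z := z.re • (1 : Matrix n n ℝ) + (z.im / μ) • B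
  map_one' := by simp
  map_mul' z w := by
    simp only [Complex.mul_re, Complex.mul_im]
    rw [add_mul, mul_add, mul_add]
    simp only [smul_mul_assoc, mul_smul_comm, one_mul, mul_one, hB, smul_smul]
    match_scalars <;> field_simp <;> ring
  map_zero' := by simp
  map_add' z w := by
    simp only [Complex.add_re, Complex.add_im]
    match_scalars <;> field_simp

@[simp] lemma phiRH_apply {n : Type*} [Fintype n] [DecidableEq n] (μ : ℝ) (hμ : μ ≠ 0)
    (B : Matrix n n ℝ) (hB : B * B = (-(μ ^ 2)) • 1) (z : ℂ) :
    phiRH μ hμ B hB z = z.re • (1 : Matrix n n ℝ) + (z.im / μ) • B := rfl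

lemma exp_aux {n : Type*} [Fintype n] [DecidableEq n] (l μ : ℝ) (hμ : μ ≠ 0)
    (B : Matrix n n ℝ) (hB : B * B = (-(μ ^ 2)) • 1) (t : ℝ) :
    NormedSpace.exp (t • (l • (1 : Matrix n n ℝ) + B)) =
      (Real.exp (l * t) * Real.cos (μ * t)) • 1 +
        (Real.exp (l * t) * Real.sin (μ * t) / μ) • B := by
  set φ := phiRH μ hμ B hB with hφ
  have hφc : Continuous φ := by
    show Continuous fun z : ℂ => z.re • (1 : Matrix n n ℝ) + (z.im / μ) • B
    fun_prop
  set z0 : ℂ := (l : ℂ) + (μ : ℂ) * Complex.I with hz0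
  have hre : ((t : ℂ) * z0).re = t * l := by simp [hz0]
  have him : ((t : ℂ) * z0).im = t * μ := by simp [hz0]
  have h1 : φ ((t : ℂ) * z0) = t • (l • (1 : Matrix n n ℝ) + B) := by
    rw [hφ, phiRH_apply, hre, him]
    match_scalars <;> field_simp
  letI : SeminormedRing (Matrix n n ℝ) := Matrix.linftyOpSemiNormedRing
  letI : NormedRing (Matrix n n ℝ) := Matrix.linftyOpNormedRing
  letI : NormedAlgebra ℝ (Matrix n n ℝ) := Matrix.linftyOpNormedAlgebra
  have h2 := NormedSpace.map_exp φ hφc ((t : ℂ) * z0)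
  rw [h1] at h2
  refine Eq.trans h2.symm ?_
  have h3 : NormedSpace.exp ((t : ℂ) * z0) = Complex.exp ((t : ℂ) * z0) := by
    rw [Complex.exp_eq_exp_ℂ]
  rw [h3, hφ, phiRH_apply, Complex.exp_re, Complex.exp_im, hre, him,
    mul_comm t l, mul_comm t μ]

theorem stmt_9 (σ δ ρ : ℝ) (hσ : σ < 0) (hδ : δ < 0) (hdisc : σ ^ 2 + 4 * δ < 0)
    (hρ : 0 ≤ ρ)
    (A : Matrix (Fin 2) (Fin 2) ℝ) (hA : A = !![σ, δ; 1, 0])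
    (h : (Fin 2 → ℝ) → ℝ)
    (hh : ∀ p : Fin 2 → ℝ, h p = if p 0 ≤ 0 then p 1 else p 1 - ρ * p 0)
    (Sig SigPlus : Set (Fin 2 → ℝ))
    (hSig : Sig = {p | h p = 0}) (hSigPlus : SigPlus = {p | 0 ≤ h p}) :
    ∀ q ∈ SigPlus \ Sig, ∃ t₁ t₂ : ℝ, t₁ < 0 ∧ 0 < t₂ ∧
      (NormedSpace.exp (t₁ • A)).mulVec q ∈ Sig ∧
      (NormedSpace.exp (t₂ • A)).mulVec q ∈ Sig := by
  intro q hq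
  obtain ⟨hqp, hqn⟩ := hq
  rw [hSigPlus] at hqp
  rw [hSig] at hqn
  have hhq : 0 < h q := lt_of_le_of_ne hqp (Ne.symm hqn)
  have hh' : ∀ p : Fin 2 → ℝ, h p = p 1 - ρ * max (p 0) 0 := by
    intro p
    rw [hh]
    rcases le_or_gt (p 0) 0 with h0 | h0
    · rw [if_pos h0, max_eq_right h0]; ring
    · rw [if_neg (not_le.mpr h0), max_eq_left h0.le]
  set l : ℝ := σ / 2 with hldef
  set μ : ℝ := Real.sqrt (-(σ ^ 2 + 4 * δ)) / 2 with hμdef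
  have hx : 0 < -(σ ^ 2 + 4 * δ) := by linarith
  have hμpos : 0 < μ := div_pos (Real.sqrt_pos.mpr hx) two_pos
  have hμ2 : μ ^ 2 = -(σ ^ 2 + 4 * δ) / 4 := by
    rw [hμdef, div_pow, Real.sq_sqrt hx.le]; norm_num
  set B : Matrix (Fin 2) (Fin 2) ℝ := A - l • 1 with hBdef
  have hAeq : A = l • (1 : Matrix (Fin 2) (Fin 2) ℝ) + B := by rw [hBdef]; abel
  have hB2 : B * B = (-(μ ^ 2)) • (1 : Matrix (Fin 2) (Fin 2) ℝ) := by
    rw [hBdef, hA]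
    ext i j
    fin_cases i <;> fin_cases j <;>
      simp [Matrix.mul_apply, Fin.sum_univ_two, Matrix.sub_apply, Matrix.smul_apply,
        Matrix.one_apply, smul_eq_mul] <;>
      nlinarith [hμ2]
  set w : ℝ → Fin 2 → ℝ := fun t => (NormedSpace.exp (t • A)).mulVec q with hwdef
  have hw : ∀ t, w t = (Real.exp (l * t) * Real.cos (μ * t)) • q +
      (Real.exp (l * t) * Real.sin (μ * t) / μ) • B.mulVec q := by
    intro t
    rw [hwdef]
    show (NormedSpace.exp (t • A)).mulVec q = _
    rw [hAeq, exp_aux l μ hμpos.ne' B hB2 t, Matrix.add_mulVec,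
      Matrix.smul_mulVec, Matrix.smul_mulVec, Matrix.one_mulVec]
  set F : ℝ → ℝ := fun t => h (w t) with hFdef
  have hF' : ∀ t, F t = w t 1 - ρ * max (w t 0) 0 := fun t => hh' (w t)
  have hwc : ∀ i, Continuous fun t => w t i := by
    intro i
    have : (fun t => w t i) = fun t =>
        (Real.exp (l * t) * Real.cos (μ * t)) * q i +
        (Real.exp (l * t) * Real.sin (μ * t) / μ) * (B.mulVec q) i := by
      funext t
      rw [hw t]
      simp [smul_eq_mul]
      fin_cases i <;> simp
    rw [this]
    fun_prop
  have hFc : Continuous F := by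
    have : F = fun t => w t 1 - ρ * max (w t 0) 0 := funext hF'
    rw [this]
    exact (hwc 1).sub (continuous_const.mul ((hwc 0).max continuous_const))
  have hw0 : w 0 = q := by
    rw [hw 0]
    simp
  have hF0 : 0 < F 0 := by
    have : F 0 = h q := by rw [hFdef]; simp [hw0]
    rw [this]; exact hhq
  have hq1 : 0 < q 1 := by
    have h1 := hh' q
    have h2 : 0 ≤ ρ * max (q 0) 0 := mul_nonneg hρ (le_max_right _ _)
    nlinarith
  -- value at times with cos = -1, sin = 0
  have hFneg : ∀ t : ℝ, Real.cos (μ * t) = -1 → Real.sin (μ * t) = 0 → F t < 0 := by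
    intro t hc hs
    have e1 : w t 1 = -(Real.exp (l * t) * q 1) := by
      rw [hw t]; simp [smul_eq_mul, hc, hs]
    have e2 : 0 ≤ ρ * max (w t 0) 0 := mul_nonneg hρ (le_max_right _ _)
    rw [hF' t, e1]
    have := Real.exp_pos (l * t)
    nlinarith
  set T : ℝ := Real.pi / μ with hTdef
  have hT : 0 < T := div_pos Real.pi_pos hμpos
  have hμT : μ * T = Real.pi := by
    rw [hTdef, mul_comm]
    exact div_mul_cancel₀ _ hμpos.ne'
  have hFT : F T < 0 := hFneg T (by rw [hμT, Real.cos_pi]) (by rw [hμT, Real.sin_pi])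
  have hFnT : F (-T) < 0 := by
    refine hFneg (-T) ?_ ?_
    · rw [mul_neg, hμT, Real.cos_neg, Real.cos_pi]
    · rw [mul_neg, hμT, Real.sin_neg, Real.sin_pi, neg_zero]
  -- positive time crossing
  obtain ⟨s₂, hs₂mem, hs₂⟩ := intermediate_value_Icc' hT.le hFc.continuousOn
    (Set.mem_Icc.mpr ⟨hFT.le, hF0.le⟩)
  have hs₂pos : 0 < s₂ := by
    rcases lt_or_eq_of_le hs₂mem.1 with h' | h'
    · exact h'
    · exfalso; rw [← h'] at hs₂; exact hF0.ne' hs₂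
  -- negative time crossing
  obtain ⟨s₁, hs₁mem, hs₁⟩ := intermediate_value_Icc (neg_nonpos.mpr hT.le) hFc.continuousOn
    (Set.mem_Icc.mpr ⟨hFnT.le, hF0.le⟩)
  have hs₁neg : s₁ < 0 := by
    rcases lt_or_eq_of_le hs₁mem.2 with h' | h'
    · exact h'
    · exfalso; rw [h'] at hs₁; exact hF0.ne' hs₁
  refine ⟨s₁, s₂, hs₁neg, hs₂pos, ?_, ?_⟩
  · rw [hSig]; exact hs₁
  · rw [hSig]; exact hs₂
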